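/- arXiv:2005.04348 — 8 statements merged into one kernel-verified Lean document; each statement's English description precedes it below -/
import Mathlib

section
/- Let M be a positive integer and b, d, B, D positive integers with bd = BD = M and d ≤ D. Let Q = dL = Dl be the least common multiple of d and D. Then the number of fixed coincidence points c(Γ(b,d), Γ(B,D)) = #{(i,j) ∈ [M]² : Γ(b,d)(i,j) = Γ(B,D)(i,j)} satisfies M²/L² ≤ c(Γ(b,d), Γ(B,D)) ≤ M²/L. -/
/-- The partial transpose `Γ(b,d)` in 0-based coordinates. -/
def pt (d : ℕ) (p : ℕ × ℕ) : ℕ × ℕ :=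
  (d * (p.1 / d) + p.2 % d, d * (p.2 / d) + p.1 % d)

lemma pt_eq_iff (d D : ℕ) (i j : ℕ) :
    pt d (i, j) = pt D (i, j) ↔ i % D + j % d = i % d + j % D := by
  simp only [pt, Prod.mk.injEq]
  have h1 := Nat.div_add_mod i d
  have h2 := Nat.div_add_mod j d
  have h3 := Nat.div_add_mod i D
  have h4 := Nat.div_add_mod j D
  have h5 := Nat.mod_le i d
  omega

lemma modeq_lcm (d D a b : ℕ) (h1 : a % d = b % d) (h2 : a % D = b % D) :
    a % Nat.lcm d D = b % Nat.lcm d D := by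
  have h1' : (d:ℤ) ∣ (b:ℤ) - a := Nat.modEq_iff_dvd.mp h1
  have h2' : (D:ℤ) ∣ (b:ℤ) - a := Nat.modEq_iff_dvd.mp h2
  have h3 : ((Int.lcm (d:ℤ) (D:ℤ) : ℕ) : ℤ) ∣ (b:ℤ) - a := Int.coe_lcm_dvd h1' h2'
  have h4 : Int.lcm (d:ℤ) (D:ℤ) = Nat.lcm d D := by simp [Int.lcm]
  exact Nat.modEq_of_dvd (h4 ▸ h3)

lemma fiber_upper (d D M k i : ℕ) (hd : 0 < d) (hD : 0 < D)
    (hk : Nat.lcm d D * k = M) :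
    ((Finset.range M).filter (fun j => pt d (i, j) = pt D (i, j))).card ≤ d * k := by
  have hQpos : 0 < Nat.lcm d D := Nat.lcm_pos hd hD
  refine le_trans (Finset.card_le_card_of_injOn (t := Finset.range d ×ˢ Finset.range k)
    (fun j => (j % d, j / Nat.lcm d D)) ?_ ?_) (by simp)
  · intro j hj
    simp only [Finset.mem_coe, Finset.mem_filter, Finset.mem_range] at hj
    simp only [Finset.mem_coe, Finset.mem_product, Finset.mem_range]
    refine ⟨Nat.mod_lt _ hd, ?_⟩
    rw [Nat.div_lt_iff_lt_mul hQpos, mul_comm k, hk]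
    exact hj.1
  · intro j₁ hj₁ j₂ hj₂ heq
    simp only [Finset.coe_filter, Set.mem_setOf_eq, Finset.mem_range, pt_eq_iff] at hj₁ hj₂
    simp only [Prod.mk.injEq] at heq
    have e1 : j₁ % D = j₂ % D := by omega
    have e2 : j₁ % Nat.lcm d D = j₂ % Nat.lcm d D := modeq_lcm d D _ _ heq.1 e1
    have d1 := Nat.div_add_mod j₁ (Nat.lcm d D)
    have d2 := Nat.div_add_mod j₂ (Nat.lcm d D)
    have e3 : Nat.lcm d D * (j₁ / Nat.lcm d D) = Nat.lcm d D * (j₂ / Nat.lcm d D) := by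
      rw [heq.2]
    omega

lemma fiber_lower (d D M k L i : ℕ) (hd : 0 < d) (hD : 0 < D)
    (hk : Nat.lcm d D * k = M) (hL : Nat.lcm d D = d * L) :
    Nat.gcd d D * k ≤
      ((Finset.range M).filter (fun j => pt d (i, j) = pt D (i, j))).card := by
  set Q := Nat.lcm d D with hQdef
  set g := Nat.gcd d D with hgdef
  have hQpos : 0 < Q := Nat.lcm_pos hd hD
  have hgpos : 0 < g := Nat.gcd_pos_of_pos_left D hd
  have hgd : g ∣ d := Nat.gcd_dvd_left d D
  have hgD : g ∣ D := Nat.gcd_dvd_right d D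
  have hQd : d ∣ Q := Nat.dvd_lcm_left d D
  have hQD : D ∣ Q := Nat.dvd_lcm_right d D
  set x := i % d with hxdef
  set y := i % D with hydef
  set r := i % Q with hrdef
  set c₀ := min x y with hc₀def
  have hx : x < d := Nat.mod_lt _ hd
  have hy : y < D := Nat.mod_lt _ hD
  have hr : r < Q := Nat.mod_lt _ hQpos
  have hrx : r % d = x := Nat.mod_mod_of_dvd i hQd
  have hry : r % D = y := Nat.mod_mod_of_dvd i hQD
  have hxg : x % g = y % g := by
    rw [hxdef, hydef, Nat.mod_mod_of_dvd i hgd, Nat.mod_mod_of_dvd i hgD]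
  have key : g ≤ c₀ + min (d - x) (D - y) := by
    rcases le_total x y with hxy | hxy
    · rcases le_total (d - x) (D - y) with hm | hm
      · have := Nat.le_of_dvd hd hgd; omega
      · have hdvd : g ∣ y - x := Nat.dvd_of_mod_eq_zero
          (Nat.sub_mod_eq_zero_of_mod_eq hxg.symm)
        have h5 : g ∣ D - (y - x) := Nat.dvd_sub hgD hdvd
        have h6 : 0 < D - (y - x) := by omega
        have := Nat.le_of_dvd h6 h5
        omega
    · rcases le_total (D - y) (d - x) with hm | hm
      · have := Nat.le_of_dvd hD hgD; omega
      · have hdvd : g ∣ x - y := Nat.dvd_of_mod_eq_zero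
          (Nat.sub_mod_eq_zero_of_mod_eq hxg)
        have h5 : g ∣ d - (x - y) := Nat.dvd_sub hgd hdvd
        have h6 : 0 < d - (x - y) := by omega
        have := Nat.le_of_dvd h6 h5
        omega
  set l' := Q / D with hl'def
  have hl' : D * l' = Q := Nat.mul_div_cancel' hQD
  have hc₀x : c₀ ≤ x := min_le_left _ _
  have hc₀y : c₀ ≤ y := min_le_right _ _
  -- facts about w s = r - c₀ + s for s < g
  have wfacts : ∀ s < g, (r - c₀ + s) % d = x - c₀ + s ∧ x - c₀ + s < d ∧
      (r - c₀ + s) % D = y - c₀ + s ∧ y - c₀ + s < D ∧ (r - c₀ + s) < Q := by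
    intro s hs
    have hmx : min (d - x) (D - y) ≤ d - x := min_le_left _ _
    have hmy : min (d - x) (D - y) ≤ D - y := min_le_right _ _
    have h7 : x - c₀ + s < d := by omega
    have h7' : y - c₀ + s < D := by omega
    have hdm := Nat.div_add_mod r d
    have hDm := Nat.div_add_mod r D
    have hw : r - c₀ + s = d * (r / d) + (x - c₀ + s) := by omega
    have hw' : r - c₀ + s = D * (r / D) + (y - c₀ + s) := by omega
    have m1 : (r - c₀ + s) % d = x - c₀ + s := by
      rw [hw, Nat.mul_add_mod, Nat.mod_eq_of_lt h7]
    have m2 : (r - c₀ + s) % D = y - c₀ + s := by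
      rw [hw', Nat.mul_add_mod, Nat.mod_eq_of_lt h7']
    have h8 : r / D < l' := by rw [Nat.div_lt_iff_lt_mul hD, mul_comm, hl']; exact hr
    have h9 : D * (r / D) + D ≤ Q := by
      calc D * (r / D) + D = D * (r / D + 1) := by ring
        _ ≤ D * l' := Nat.mul_le_mul_left D h8
        _ = Q := hl' 
    have hA : r - c₀ + s < Q := by omega
    exact ⟨m1, h7, m2, h7', hA⟩
  refine le_trans (le_of_eq (by simp))
    (Finset.card_le_card_of_injOn
      (s := Finset.range g ×ˢ Finset.range k)
      (t := (Finset.range M).filter (fun j => pt d (i, j) = pt D (i, j)))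
      (fun p => (r - c₀ + p.1) + p.2 * Q) ?_ ?_)
  · rintro ⟨s, t⟩ hp
    simp only [Finset.mem_coe, Finset.mem_product, Finset.mem_range] at hp
    obtain ⟨hs, ht⟩ := hp
    obtain ⟨m1, h7, m2, h7', hA⟩ := wfacts s hs
    simp only [Finset.mem_coe, Finset.mem_filter, Finset.mem_range, pt_eq_iff]
    constructor
    · have : (t + 1) * Q ≤ k * Q := Nat.mul_le_mul_right Q (by omega)
      have : r - c₀ + s + t * Q < (t + 1) * Q := by rw [add_mul, one_mul]; omega
      calc r - c₀ + s + t * Q < (t+1) * Q := this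
        _ ≤ k * Q := by exact Nat.mul_le_mul_right Q (by omega)
        _ = M := by rw [mul_comm]; exact hk
    · have jd : (r - c₀ + s + t * Q) % d = x - c₀ + s := by
        have : r - c₀ + s + t * Q = (r - c₀ + s) + (t * L) * d := by rw [hL]; ring
        rw [this, Nat.add_mul_mod_self_right, m1]
      have jD : (r - c₀ + s + t * Q) % D = y - c₀ + s := by
        have : r - c₀ + s + t * Q = (r - c₀ + s) + (t * l') * D := by rw [← hl']; ring
        rw [this, Nat.add_mul_mod_self_right, m2]
      rw [jd, jD, ← hxdef, ← hydef]
      omega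
  · rintro ⟨s₁, t₁⟩ hp₁ ⟨s₂, t₂⟩ hp₂ heq
    simp only [Finset.coe_product, Set.mem_prod, Finset.mem_coe, Finset.mem_range] at hp₁ hp₂
    obtain ⟨m1, _, _, _, hA₁⟩ := wfacts s₁ hp₁.1
    obtain ⟨m2, _, _, _, hA₂⟩ := wfacts s₂ hp₂.1
    simp only at heq
    have hmod : (r - c₀ + s₁ + t₁ * Q) % Q = (r - c₀ + s₂ + t₂ * Q) % Q := by rw [heq]
    rw [Nat.add_mul_mod_self_right, Nat.add_mul_mod_self_right,
      Nat.mod_eq_of_lt hA₁, Nat.mod_eq_of_lt hA₂] at hmod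
    have hs : s₁ = s₂ := by omega
    have ht : t₁ = t₂ := by
      subst hs
      have : t₁ * Q = t₂ * Q := by omega
      exact Nat.eq_of_mul_eq_mul_right hQpos this
    simp [hs, ht]

/-- Let `bd = BD = M`, `d ≤ D`, and `L = lcm(d,D)/d`.  Then the number `c` of
points `(i,j) ∈ [M]²` where `Γ(b,d)` and `Γ(B,D)` agree satisfies
`M²/L² ≤ c ≤ M²/L` (stated multiplicatively: `M² ≤ c·L²` and `c·L ≤ M²`). -/
theorem stmt_4 (b d B D M L : ℕ) (hb : 0 < b) (hd : 0 < d) (hB : 0 < B)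
    (hD : 0 < D) (hM : M = b * d) (hM' : M = B * D) (hdD : d ≤ D)
    (hL : Nat.lcm d D = d * L) :
    M ^ 2 ≤ (((Finset.range M) ×ˢ (Finset.range M)).filter
        (fun p => pt d p = pt D p)).card * L ^ 2 ∧
    (((Finset.range M) ×ˢ (Finset.range M)).filter
        (fun p => pt d p = pt D p)).card * L ≤ M ^ 2 := by
  have hQpos : 0 < Nat.lcm d D := Nat.lcm_pos hd hD
  have hgQ : Nat.gcd d D * Nat.lcm d D = d * D := Nat.gcd_mul_lcm d D
  have hgL : Nat.gcd d D * L = D := by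
    have h1 : d * (Nat.gcd d D * L) = d * D := by rw [← hgQ, hL]; ring
    exact Nat.eq_of_mul_eq_mul_left hd h1
  have hQdvdM : Nat.lcm d D ∣ M := Nat.lcm_dvd ⟨b, by rw [hM]; ring⟩ ⟨B, by rw [hM']; ring⟩
  set k := M / Nat.lcm d D with hkdef
  have hk : Nat.lcm d D * k = M := Nat.mul_div_cancel' hQdvdM
  have hc : (((Finset.range M) ×ˢ (Finset.range M)).filter
      (fun p => pt d p = pt D p)).card
      = ∑ i ∈ Finset.range M,
        ((Finset.range M).filter (fun j => pt d (i, j) = pt D (i, j))).card := by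
    rw [Finset.card_filter, Finset.sum_product]
    exact Finset.sum_congr rfl fun i _ => (Finset.card_filter _ _).symm
  constructor
  · -- lower bound: M^2 ≤ c * L^2
    have hstep : ∀ i ∈ Finset.range M,
        M ≤ ((Finset.range M).filter (fun j => pt d (i, j) = pt D (i, j))).card * L ^ 2 := by
      intro i _
      have h1 := fiber_lower d D M k L i hd hD hk hL
      calc M = Nat.lcm d D * k := hk.symm
        _ = d * L * k := by rw [hL]
        _ ≤ (Nat.gcd d D * L) * L * k := by
            have : d ≤ Nat.gcd d D * L := by rw [hgL]; exact hdD
            exact Nat.mul_le_mul_right k (Nat.mul_le_mul_right L this)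
        _ = (Nat.gcd d D * k) * L ^ 2 := by ring
        _ ≤ _ := Nat.mul_le_mul_right _ h1
    calc M ^ 2 = ∑ _i ∈ Finset.range M, M := by
          rw [Finset.sum_const, Finset.card_range, smul_eq_mul, sq]
      _ ≤ ∑ i ∈ Finset.range M,
          ((Finset.range M).filter (fun j => pt d (i, j) = pt D (i, j))).card * L ^ 2 :=
          Finset.sum_le_sum hstep
      _ = _ := by rw [hc, Finset.sum_mul]
  · -- upper bound: c * L ≤ M^2
    have hstep : ∀ i ∈ Finset.range M,
        ((Finset.range M).filter (fun j => pt d (i, j) = pt D (i, j))).card * L ≤ M := by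
      intro i _
      have h1 := fiber_upper d D M k i hd hD hk
      calc ((Finset.range M).filter (fun j => pt d (i, j) = pt D (i, j))).card * L
          ≤ d * k * L := Nat.mul_le_mul_right L h1
        _ = d * L * k := by ring
        _ = Nat.lcm d D * k := by rw [hL]
        _ = M := hk
    calc (((Finset.range M) ×ˢ (Finset.range M)).filter
          (fun p => pt d p = pt D p)).card * L
        = ∑ i ∈ Finset.range M,
          ((Finset.range M).filter (fun j => pt d (i, j) = pt D (i, j))).card * L := by
          rw [hc, Finset.sum_mul]
      _ ≤ ∑ _i ∈ Finset.range M, M := Finset.sum_le_sum hstep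
      _ = M ^ 2 := by rw [Finset.sum_const, Finset.card_range, smul_eq_mul, sq]
end

section
/- Let M = bd = BD with b,d,B,D positive integers. Then #{(i,j,k) ∈ [M]³ : π₂∘Γ(b,d)(i,j) = π₂∘Γ(B,D)(k,j)} ≤ M³/D, where π₂ is projection onto the second coordinate. -/
/-- For `M = bd = BD`, the count of `(i,j,k) ∈ [M]³` with
`π₂∘Γ(b,d)(i,j) = π₂∘Γ(B,D)(k,j)` is at most `M³/D`. -/
theorem stmt_6 (b d B D M : ℕ) (hb : 0 < b) (hd : 0 < d) (hB : 0 < B)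
    (hD : 0 < D) (hM : M = b * d) (hM' : M = B * D) :
    (((Finset.range M) ×ˢ (Finset.range M) ×ˢ (Finset.range M)).filter
        (fun t => (pt d (t.1, t.2.1)).2 = (pt D (t.2.2, t.2.1)).2)).card * D
      ≤ M ^ 3 := by
  have key : (((Finset.range M) ×ˢ (Finset.range M) ×ˢ (Finset.range M)).filter
        (fun t => (pt d (t.1, t.2.1)).2 = (pt D (t.2.2, t.2.1)).2)).card
      ≤ ((Finset.range M) ×ˢ (Finset.range M) ×ˢ (Finset.range B)).card := by
    apply Finset.card_le_card_of_injOn (fun t => (t.1, t.2.1, t.2.2 / D))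
    · rintro ⟨i, j, k⟩ (ht : (i, j, k) ∈ (Finset.range M ×ˢ Finset.range M ×ˢ Finset.range M).filter _)
      show (i, j, k / D) ∈ Finset.range M ×ˢ Finset.range M ×ˢ Finset.range B
      simp only [Finset.mem_filter, Finset.mem_product, Finset.mem_range] at ht ⊢
      refine ⟨ht.1.1, ht.1.2.1, ?_⟩
      have hk : k < B * D := hM' ▸ ht.1.2.2
      exact Nat.div_lt_of_lt_mul (Nat.mul_comm B D ▸ hk)
    · rintro ⟨i, j, k⟩ (ht : (i, j, k) ∈ (Finset.range M ×ˢ Finset.range M ×ˢ Finset.range M).filter _) ⟨i', j', k'⟩ (ht' : (i', j', k') ∈ (Finset.range M ×ˢ Finset.range M ×ˢ Finset.range M).filter _) heq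
      replace ht : (i, j, k) ∈ (Finset.range M ×ˢ Finset.range M ×ˢ Finset.range M).filter (fun t => (pt d (t.1, t.2.1)).2 = (pt D (t.2.2, t.2.1)).2) := ht
      replace ht' : (i', j', k') ∈ (Finset.range M ×ˢ Finset.range M ×ˢ Finset.range M).filter (fun t => (pt d (t.1, t.2.1)).2 = (pt D (t.2.2, t.2.1)).2) := ht'
      simp only [Finset.mem_coe, Finset.mem_filter] at ht ht'
      simp only [pt] at ht ht'
      simp only [Prod.mk.injEq] at heq ⊢
      obtain ⟨hi, hj, hq⟩ := heq
      subst hi; subst hj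
      refine ⟨rfl, rfl, ?_⟩
      have h1 := ht.2
      have h2 := ht'.2
      have hmod : k % D = k' % D := by omega
      have e1 := Nat.div_add_mod k D
      have e2 := Nat.div_add_mod k' D
      rw [hq, hmod] at e1
      omega
  calc (((Finset.range M) ×ˢ (Finset.range M) ×ˢ (Finset.range M)).filter
        (fun t => (pt d (t.1, t.2.1)).2 = (pt D (t.2.2, t.2.1)).2)).card * D
      ≤ (M * (M * B)) * D := by
        apply Nat.mul_le_mul_right
        simpa using key
    _ = M ^ 3 := by rw [hM']; ring
end

section
/- Let M = bd = BD with b,d,B,D positive integers. Then #{(i,j,k) ∈ [M]³ : π₁∘Γ(b,d)(i,j) = π₁∘Γ(B,D)(k,j)} ≤ M³/B, where π₁ is projection onto the first coordinate. -/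
/-- For `M = bd = BD`, the count of `(i,j,k) ∈ [M]³` with
`π₁∘Γ(b,d)(i,j) = π₁∘Γ(B,D)(k,j)` is at most `M³/B`. -/
theorem stmt_7 (b d B D M : ℕ) (hb : 0 < b) (hd : 0 < d) (hB : 0 < B)
    (hD : 0 < D) (hM : M = b * d) (hM' : M = B * D) :
    (((Finset.range M) ×ˢ (Finset.range M) ×ˢ (Finset.range M)).filter
        (fun t => (pt d (t.1, t.2.1)).1 = (pt D (t.2.2, t.2.1)).1)).card * B
      ≤ M ^ 3 := by
  have key : (((Finset.range M) ×ˢ (Finset.range M) ×ˢ (Finset.range M)).filter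
        (fun t => (pt d (t.1, t.2.1)).1 = (pt D (t.2.2, t.2.1)).1)).card
      ≤ ((Finset.range M) ×ˢ (Finset.range M) ×ˢ (Finset.range D)).card := by
    apply Finset.card_le_card_of_injOn
      (fun t : ℕ × ℕ × ℕ => (t.1, t.2.1, t.2.2 % D))
    · intro t ht
      simp only [Finset.mem_coe, Finset.mem_filter, Finset.mem_product, Finset.mem_range] at ht ⊢
      exact ⟨ht.1.1, ht.1.2.1, Nat.mod_lt _ hD⟩
    · intro t1 h1 t2 h2 heq
      replace h1 : t1 ∈ ((Finset.range M) ×ˢ (Finset.range M) ×ˢ (Finset.range M)).filter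
          (fun t => (pt d (t.1, t.2.1)).1 = (pt D (t.2.2, t.2.1)).1) := h1
      replace h2 : t2 ∈ ((Finset.range M) ×ˢ (Finset.range M) ×ˢ (Finset.range M)).filter
          (fun t => (pt d (t.1, t.2.1)).1 = (pt D (t.2.2, t.2.1)).1) := h2
      rw [Finset.mem_filter] at h1 h2
      simp only [Finset.mem_coe, Finset.coe_filter, Set.mem_setOf_eq, Finset.mem_filter, Finset.mem_product,
        Finset.mem_range, pt] at h1 h2
      obtain ⟨_, e1⟩ := h1
      obtain ⟨_, e2⟩ := h2
      simp only [Prod.mk.injEq] at heq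
      obtain ⟨hi, hj, hk⟩ := heq
      rw [hi, hj] at e1
      have : D * (t1.2.2 / D) = D * (t2.2.2 / D) := by omega
      have hk2 : t1.2.2 = t2.2.2 := by
        have a1 := Nat.div_add_mod t1.2.2 D
        have a2 := Nat.div_add_mod t2.2.2 D
        omega
      exact Prod.ext hi (Prod.ext hj hk2)
  simp only [Finset.card_product, Finset.card_range] at key
  calc _ ≤ M * (M * D) * B := Nat.mul_le_mul_right _ key
    _ = M ^ 3 := by rw [hM']; ring
end

section
/- Let M = bd = BD with b,d,B,D positive integers and d ≤ D. Then #{(i,j,l) ∈ [M]³ : Γ(b,d)(i,j) = Ꞅ(B,D)(l,j)} ≤ min(M²/d, M²/B). -/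
/-- The left partial transpose `Ꞅ(B,D) = t ∘ Γ(B,D)` in 0-based coordinates. -/
def lpt (D : ℕ) (p : ℕ × ℕ) : ℕ × ℕ :=
  (D * (p.2 / D) + p.1 % D, D * (p.1 / D) + p.2 % D)

private lemma uniq_aux {D a a' q q' : ℕ} (hD : 0 < D) (ha : a < D) (ha' : a' < D)
    (h : D * q + a = D * q' + a') : q = q' ∧ a = a' := by
  constructor
  · have := congrArg (· / D) h
    simpa [Nat.mul_add_div hD, Nat.div_eq_of_lt ha, Nat.div_eq_of_lt ha'] using this
  · have := congrArg (· % D) h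
    simpa [Nat.mul_add_mod, Nat.mod_eq_of_lt ha, Nat.mod_eq_of_lt ha'] using this

private lemma key {d D : ℕ} (hd : 0 < d) (hD : 0 < D) (hdD : d ≤ D)
    {j i₁ i₂ l₁ l₂ : ℕ}
    (h₁ : pt d (i₁, j) = lpt D (l₁, j))
    (h₂ : pt d (i₂, j) = lpt D (l₂, j))
    (hq : i₁ / d = i₂ / d ∨ l₁ % D = l₂ % D) :
    i₁ = i₂ ∧ l₁ = l₂ := by
  simp only [pt, lpt, Prod.mk.injEq] at h₁ h₂
  obtain ⟨e₁, e₂⟩ := h₁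
  obtain ⟨e₁', e₂'⟩ := h₂
  -- from the second coordinates: i₁ % d = i₂ % d and l₁ / D = l₂ / D
  have hmod1 : i₁ % d < D := lt_of_lt_of_le (Nat.mod_lt _ hd) hdD
  have hmod2 : i₂ % d < D := lt_of_lt_of_le (Nat.mod_lt _ hd) hdD
  have h2lin : D * (l₁ / D) + i₂ % d = D * (l₂ / D) + i₁ % d := by linarith [e₂, e₂']
  obtain ⟨hQ, hr⟩ := uniq_aux hD hmod2 hmod1 h2lin
  -- from the first coordinates and hq: i₁ / d = i₂ / d and l₁ % D = l₂ % D
  have h1lin : d * (i₁ / d) + l₂ % D = d * (i₂ / d) + l₁ % D := by linarith [e₁, e₁']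
  have hqR : i₁ / d = i₂ / d ∧ l₁ % D = l₂ % D := by
    rcases hq with h | h
    · refine ⟨h, ?_⟩
      rw [h] at h1lin
      exact (Nat.add_left_cancel h1lin).symm
    · refine ⟨?_, h⟩
      rw [h] at h1lin
      exact Nat.eq_of_mul_eq_mul_left hd (Nat.add_right_cancel h1lin)
  constructor
  · calc i₁ = d * (i₁ / d) + i₁ % d := (Nat.div_add_mod i₁ d).symm
      _ = d * (i₂ / d) + i₂ % d := by rw [hqR.1, hr]
      _ = i₂ := Nat.div_add_mod i₂ d
  · calc l₁ = D * (l₁ / D) + l₁ % D := (Nat.div_add_mod l₁ D).symm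
      _ = D * (l₂ / D) + l₂ % D := by rw [hQ, hqR.2]
      _ = l₂ := Nat.div_add_mod l₂ D

/-- For `M = bd = BD` with `d ≤ D`, the count of `(i,j,l) ∈ [M]³` with
`Γ(b,d)(i,j) = Ꞅ(B,D)(l,j)` is at most `min(M²/d, M²/B)`. -/
theorem stmt_9 (b d B D M : ℕ) (hb : 0 < b) (hd : 0 < d) (hB : 0 < B)
    (hD : 0 < D) (hM : M = b * d) (hM' : M = B * D) (hdD : d ≤ D) :
    (((Finset.range M) ×ˢ (Finset.range M) ×ˢ (Finset.range M)).filter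
        (fun t => pt d (t.1, t.2.1) = lpt D (t.2.2, t.2.1))).card * d ≤ M ^ 2 ∧
    (((Finset.range M) ×ˢ (Finset.range M) ×ˢ (Finset.range M)).filter
        (fun t => pt d (t.1, t.2.1) = lpt D (t.2.2, t.2.1))).card * B ≤ M ^ 2 := by
  set S := ((Finset.range M) ×ˢ (Finset.range M) ×ˢ (Finset.range M)).filter
      (fun t => pt d (t.1, t.2.1) = lpt D (t.2.2, t.2.1)) with hS
  have mem_S : ∀ t ∈ S, (t.1 < M ∧ t.2.1 < M ∧ t.2.2 < M) ∧
      pt d (t.1, t.2.1) = lpt D (t.2.2, t.2.1) := by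
    intro t ht
    rw [hS, Finset.mem_filter] at ht
    simp only [Finset.mem_product, Finset.mem_range] at ht
    exact ⟨⟨ht.1.1, ht.1.2.1, ht.1.2.2⟩, ht.2⟩
  constructor
  · -- bound via (j, i/d)
    have hcard : S.card ≤ (Finset.range M ×ˢ Finset.range b).card := by
      apply Finset.card_le_card_of_injOn (fun t => (t.2.1, t.1 / d))
      · intro t ht
        obtain ⟨⟨hi, hj, hl⟩, _⟩ := mem_S t ht
        simp only [Finset.mem_coe, Finset.mem_product, Finset.mem_range]
        exact ⟨hj, by rw [Nat.div_lt_iff_lt_mul hd]; omega⟩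
      · intro t₁ ht₁ t₂ ht₂ heq
        obtain ⟨_, hc₁⟩ := mem_S t₁ ht₁
        obtain ⟨_, hc₂⟩ := mem_S t₂ ht₂
        simp only [Prod.mk.injEq] at heq
        obtain ⟨hj, hq⟩ := heq
        rw [hj] at hc₁
        obtain ⟨hi, hl⟩ := key hd hD hdD hc₁ hc₂ (Or.inl hq)
        exact Prod.ext hi (Prod.ext hj hl)
    rw [Finset.card_product, Finset.card_range, Finset.card_range] at hcard
    calc S.card * d ≤ (M * b) * d := Nat.mul_le_mul_right d hcard
      _ = M ^ 2 := by subst hM; ring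
  · -- bound via (j, l % D)
    have hcard : S.card ≤ (Finset.range M ×ˢ Finset.range D).card := by
      apply Finset.card_le_card_of_injOn (fun t => (t.2.1, t.2.2 % D))
      · intro t ht
        obtain ⟨⟨hi, hj, hl⟩, _⟩ := mem_S t ht
        simp only [Finset.mem_coe, Finset.mem_product, Finset.mem_range]
        exact ⟨hj, Nat.mod_lt _ hD⟩
      · intro t₁ ht₁ t₂ ht₂ heq
        obtain ⟨_, hc₁⟩ := mem_S t₁ ht₁
        obtain ⟨_, hc₂⟩ := mem_S t₂ ht₂
        simp only [Prod.mk.injEq] at heq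
        obtain ⟨hj, hq⟩ := heq
        rw [hj] at hc₁
        obtain ⟨hi, hl⟩ := key hd hD hdD hc₁ hc₂ (Or.inr hq)
        exact Prod.ext hi (Prod.ext hj hl)
    rw [Finset.card_product, Finset.card_range, Finset.card_range] at hcard
    calc S.card * B ≤ (M * D) * B := Nat.mul_le_mul_right B hcard
      _ = M ^ 2 := by subst hM'; ring
end

section
/- Let M = bd = BD with b,d,B,D positive integers. Then #{(i,j,l) ∈ [M]³ : π₁∘Γ(b,d)(i,j) = π₁∘Ꞅ(B,D)(l,j)} ≤ min(M³/D, M³/b). -/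
/-- For `M = bd = BD`, the count of `(i,j,l) ∈ [M]³` with
`π₁∘Γ(b,d)(i,j) = π₁∘Ꞅ(B,D)(l,j)` is at most `min(M³/D, M³/b)`. -/
theorem stmt_10 (b d B D M : ℕ) (hb : 0 < b) (hd : 0 < d) (hB : 0 < B)
    (hD : 0 < D) (hM : M = b * d) (hM' : M = B * D) :
    (((Finset.range M) ×ˢ (Finset.range M) ×ˢ (Finset.range M)).filter
        (fun t => (pt d (t.1, t.2.1)).1 = (lpt D (t.2.2, t.2.1)).1)).card * D
      ≤ M ^ 3 ∧
    (((Finset.range M) ×ˢ (Finset.range M) ×ˢ (Finset.range M)).filter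
        (fun t => (pt d (t.1, t.2.1)).1 = (lpt D (t.2.2, t.2.1)).1)).card * b
      ≤ M ^ 3 := by
  set S := (((Finset.range M) ×ˢ (Finset.range M) ×ˢ (Finset.range M)).filter
        (fun t => (pt d (t.1, t.2.1)).1 = (lpt D (t.2.2, t.2.1)).1)) with hS
  constructor
  · have h1 : S.card ≤ (Finset.range M ×ˢ Finset.range M ×ˢ Finset.range B).card := by
      apply Finset.card_le_card_of_injOn (fun t => (t.1, t.2.1, t.2.2 / D))
      · intro t ht
        change t ∈ S at ht
        show _ ∈ (Finset.range M ×ˢ Finset.range M ×ˢ Finset.range B)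
        simp only [hS, Finset.mem_filter, Finset.mem_product, Finset.mem_range] at ht ⊢
        refine ⟨ht.1.1, ht.1.2.1, ?_⟩
        have h := ht.1.2.2
        rw [hM'] at h
        exact Nat.div_lt_of_lt_mul (by rwa [mul_comm] at h)
      · rintro ⟨i1, j1, l1⟩ h1 ⟨i2, j2, l2⟩ h2 he
        change (i1, j1, l1) ∈ S at h1
        change (i2, j2, l2) ∈ S at h2
        simp only [hS, Finset.mem_filter] at h1 h2
        simp only [hS, Finset.mem_coe, Finset.mem_filter, Finset.mem_product,
          Finset.mem_range, pt, lpt] at h1 h2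
        simp only [Prod.mk.injEq] at he ⊢
        obtain ⟨e1, e2, e3⟩ := he
        subst e1; subst e2
        have c1 := h1.2
        have c2 := h2.2
        have hm : l1 % D = l2 % D := Nat.add_left_cancel (c1.symm.trans c2)
        have d1 := Nat.div_add_mod l1 D
        have d2 := Nat.div_add_mod l2 D
        rw [e3, hm] at d1
        exact ⟨rfl, rfl, (d2.symm.trans d1).symm⟩
    simp only [Finset.card_product, Finset.card_range] at h1
    calc S.card * D ≤ M * (M * B) * D := Nat.mul_le_mul_right D h1
      _ = M ^ 3 := by rw [hM']; ring
  · have h1 : S.card ≤ (Finset.range d ×ˢ Finset.range M ×ˢ Finset.range M).card := by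
      apply Finset.card_le_card_of_injOn (fun t => (t.1 % d, t.2))
      · intro t ht
        change t ∈ S at ht
        show _ ∈ (Finset.range d ×ˢ Finset.range M ×ˢ Finset.range M)
        simp only [hS, Finset.mem_filter, Finset.mem_product, Finset.mem_range] at ht ⊢
        exact ⟨Nat.mod_lt _ hd, ht.1.2.1, ht.1.2.2⟩
      · rintro ⟨i1, j1, l1⟩ h1 ⟨i2, j2, l2⟩ h2 he
        change (i1, j1, l1) ∈ S at h1
        change (i2, j2, l2) ∈ S at h2
        simp only [hS, Finset.mem_filter] at h1 h2
        simp only [hS, Finset.mem_coe, Finset.mem_filter, Finset.mem_product,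
          Finset.mem_range, pt, lpt] at h1 h2
        simp only [Prod.mk.injEq] at he ⊢
        obtain ⟨e1, e2, e3⟩ := he
        subst e2; subst e3
        have c1 := h1.2
        have c2 := h2.2
        have hq : d * (i1 / d) = d * (i2 / d) := by
          have := c1.trans c2.symm
          omega
        have hq2 : i1 / d = i2 / d := Nat.eq_of_mul_eq_mul_left hd hq
        have d1 := Nat.div_add_mod i1 d
        have d2 := Nat.div_add_mod i2 d
        rw [hq2, e1] at d1
        exact ⟨(d2.symm.trans d1).symm, rfl, rfl⟩
    simp only [Finset.card_product, Finset.card_range] at h1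
    calc S.card * b ≤ d * (M * M) * b := Nat.mul_le_mul_right b h1
      _ = M ^ 3 := by rw [hM]; ring
end

section
/- Let M = bd = BD with b,d,B,D positive integers. Then #{(i,j,l) ∈ [M]³ : π₂∘Γ(b,d)(i,j) = π₂∘Ꞅ(B,D)(l,j)} ≤ min(M³/B, M³/d). -/
/-- For `M = bd = BD`, the count of `(i,j,l) ∈ [M]³` with
`π₂∘Γ(b,d)(i,j) = π₂∘Ꞅ(B,D)(l,j)` is at most `min(M³/B, M³/d)`. -/
theorem stmt_11 (b d B D M : ℕ) (hb : 0 < b) (hd : 0 < d) (hB : 0 < B)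
    (hD : 0 < D) (hM : M = b * d) (hM' : M = B * D) :
    (((Finset.range M) ×ˢ (Finset.range M) ×ˢ (Finset.range M)).filter
        (fun t => (pt d (t.1, t.2.1)).2 = (lpt D (t.2.2, t.2.1)).2)).card * B
      ≤ M ^ 3 ∧
    (((Finset.range M) ×ˢ (Finset.range M) ×ˢ (Finset.range M)).filter
        (fun t => (pt d (t.1, t.2.1)).2 = (lpt D (t.2.2, t.2.1)).2)).card * d
      ≤ M ^ 3 := by
  constructor
  · -- fiber over (i, j, l % D)
    have h1 : (((Finset.range M) ×ˢ (Finset.range M) ×ˢ (Finset.range M)).filter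
        (fun t => (pt d (t.1, t.2.1)).2 = (lpt D (t.2.2, t.2.1)).2)).card
        ≤ ((Finset.range M) ×ˢ (Finset.range M) ×ˢ (Finset.range D)).card := by
      apply Finset.card_le_card_of_injOn (fun t => (t.1, t.2.1, t.2.2 % D))
      · intro t ht; obtain ⟨i, j, l⟩ := t
        simp only [Finset.mem_coe, Finset.mem_filter, Finset.mem_product, Finset.mem_range] at ht ⊢
        exact ⟨ht.1.1, ht.1.2.1, Nat.mod_lt _ hD⟩
      · intro t ht t' ht' h; obtain ⟨i, j, l⟩ := t; obtain ⟨i', j', l'⟩ := t'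
        replace ht : (i, j, l) ∈ Finset.filter _ _ := ht
        replace ht' : (i', j', l') ∈ Finset.filter _ _ := ht'
        rw [Finset.mem_filter] at ht ht'
        simp only [Finset.mem_coe, Finset.mem_filter, Finset.mem_product, Finset.mem_range,
          pt, lpt] at ht ht'
        simp only [Prod.mk.injEq] at h
        obtain ⟨hij, hjj, hll⟩ := h
        subst hij; subst hjj
        have hc := ht.2
        have hc' := ht'.2
        rw [hc] at hc'
        have hdiv : l / D = l' / D := by
          have := Nat.add_right_cancel hc'
          exact Nat.eq_of_mul_eq_mul_left hD this
        have : l = l' := by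
          have e1 := Nat.div_add_mod l D
          have e2 := Nat.div_add_mod l' D
          omega
        simp [this]
    calc _ ≤ ((Finset.range M) ×ˢ (Finset.range M) ×ˢ (Finset.range D)).card * B :=
          Nat.mul_le_mul_right _ h1
      _ = M * (M * D) * B := by simp [Finset.card_product, mul_assoc]
      _ = M ^ 3 := by rw [hM']; ring
  · -- fiber over (i / d, j, l)
    have h1 : (((Finset.range M) ×ˢ (Finset.range M) ×ˢ (Finset.range M)).filter
        (fun t => (pt d (t.1, t.2.1)).2 = (lpt D (t.2.2, t.2.1)).2)).card
        ≤ ((Finset.range b) ×ˢ (Finset.range M) ×ˢ (Finset.range M)).card := by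
      apply Finset.card_le_card_of_injOn (fun t => (t.1 / d, t.2.1, t.2.2))
      · intro t ht; obtain ⟨i, j, l⟩ := t
        simp only [Finset.mem_coe, Finset.mem_filter, Finset.mem_product, Finset.mem_range] at ht ⊢
        refine ⟨(Nat.div_lt_iff_lt_mul hd).2 ?_, ht.1.2.1, ht.1.2.2⟩
        calc i < M := ht.1.1
          _ = b * d := hM
      · intro t ht t' ht' h; obtain ⟨i, j, l⟩ := t; obtain ⟨i', j', l'⟩ := t'
        replace ht : (i, j, l) ∈ Finset.filter _ _ := ht
        replace ht' : (i', j', l') ∈ Finset.filter _ _ := ht'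
        rw [Finset.mem_filter] at ht ht'
        simp only [Finset.mem_coe, Finset.mem_filter, Finset.mem_product, Finset.mem_range,
          pt, lpt] at ht ht'
        simp only [Prod.mk.injEq] at h
        obtain ⟨hii, hjj, hll⟩ := h
        subst hjj; subst hll
        have hc := ht.2
        have hc' := ht'.2
        rw [← hc'] at hc
        have hmod : i % d = i' % d := Nat.add_left_cancel hc
        have : i = i' := by
          have e1 := Nat.div_add_mod i d
          have e2 := Nat.div_add_mod i' d
          rw [hii] at e1
          omega
        simp [this]
    calc _ ≤ ((Finset.range b) ×ˢ (Finset.range M) ×ˢ (Finset.range M)).card * d :=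
          Nat.mul_le_mul_right _ h1
      _ = b * (M * M) * d := by simp [Finset.card_product, mul_assoc]
      _ = M ^ 3 := by rw [hM]; ring
end

section
/- Let M = bd = BD with b,d,B,D positive integers, and let e be a positive integer with d·e ≤ D. Then #{(i,j) ∈ [M]² : Γ(b,d)(i,j) = Ꞅ(B,D)(i,j)} ≥ d·e², since every pair (α₁·d+β, α₂·d+β) with 0 ≤ α₁,α₂ ≤ e−1 and β ∈ [d] is a common fixed point of both Γ(b,d) and Ꞅ(B,D). -/
lemma fix_pt (d : ℕ) (α₁ α₂ β : ℕ) (hβ : β < d) :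
    pt d (α₁ * d + β, α₂ * d + β) = (α₁ * d + β, α₂ * d + β) := by
  have hd : 0 < d := lt_of_le_of_lt (Nat.zero_le _) hβ
  simp [pt, Nat.add_mul_div_left, Nat.mul_add_div, Nat.mul_add_mod,
    Nat.div_eq_of_lt hβ, Nat.mod_eq_of_lt hβ, hd, Nat.mul_comm]

lemma fix_lpt (D : ℕ) (x y : ℕ) (hx : x < D) (hy : y < D) :
    lpt D (x, y) = (x, y) := by
  simp [lpt, Nat.div_eq_of_lt hx, Nat.div_eq_of_lt hy,
    Nat.mod_eq_of_lt hx, Nat.mod_eq_of_lt hy]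

/-- For `M = bd = BD` and `e` with `d·e ≤ D`, the number of points where
`Γ(b,d)` and `Ꞅ(B,D)` agree is at least `d·e²`; indeed every pair
`(α₁·d+β, α₂·d+β)` with `α₁, α₂ < e`, `β < d` is a common fixed point of
both maps. -/
theorem stmt_12 (b d B D M e : ℕ) (hb : 0 < b) (hd : 0 < d) (hB : 0 < B)
    (hD : 0 < D) (he : 0 < e) (hM : M = b * d) (hM' : M = B * D)
    (hde : d * e ≤ D) :
    d * e ^ 2 ≤ (((Finset.range M) ×ˢ (Finset.range M)).filter
        (fun p => pt d p = lpt D p)).card ∧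
    (∀ α₁ α₂ β : ℕ, α₁ < e → α₂ < e → β < d →
      pt d (α₁ * d + β, α₂ * d + β) = (α₁ * d + β, α₂ * d + β) ∧
      lpt D (α₁ * d + β, α₂ * d + β) = (α₁ * d + β, α₂ * d + β)) := by
  have hDM : D ≤ M := by
    rw [hM']; exact Nat.le_mul_of_pos_left D hB
  have hbound : ∀ α β : ℕ, α < e → β < d → α * d + β < D := by
    intro α β hα hβ
    calc α * d + β < α * d + d := by omega
      _ = (α + 1) * d := by ring
      _ ≤ e * d := Nat.mul_le_mul_right d hα
      _ ≤ D := by rwa [Nat.mul_comm] at hde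
  have key : ∀ α₁ α₂ β : ℕ, α₁ < e → α₂ < e → β < d →
      pt d (α₁ * d + β, α₂ * d + β) = (α₁ * d + β, α₂ * d + β) ∧
      lpt D (α₁ * d + β, α₂ * d + β) = (α₁ * d + β, α₂ * d + β) := by
    intro α₁ α₂ β h1 h2 h3
    exact ⟨fix_pt d α₁ α₂ β h3,
      fix_lpt D _ _ (hbound α₁ β h1 h3) (hbound α₂ β h2 h3)⟩
  refine ⟨?_, key⟩
  have hcard : d * e ^ 2 =
      ((Finset.range e) ×ˢ (Finset.range e) ×ˢ (Finset.range d)).card := by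
    simp [Finset.card_product]; ring
  rw [hcard]
  apply Finset.card_le_card_of_injOn
    (fun q => (q.1 * d + q.2.2, q.2.1 * d + q.2.2))
  · intro q hq
    simp only [Finset.mem_coe, Finset.mem_product, Finset.mem_range] at hq
    obtain ⟨h1, h2, h3⟩ := hq
    simp only [Finset.mem_coe, Finset.mem_filter, Finset.mem_product, Finset.mem_range]
    refine ⟨⟨lt_of_lt_of_le (hbound _ _ h1 h3) hDM,
      lt_of_lt_of_le (hbound _ _ h2 h3) hDM⟩, ?_⟩
    have := key q.1 q.2.1 q.2.2 h1 h2 h3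
    rw [this.1, this.2]
  · intro q hq q' hq' hEq
    simp only [Finset.mem_coe, Finset.mem_product, Finset.mem_range] at hq hq'
    obtain ⟨h1, h2, h3⟩ := hq
    obtain ⟨h1', h2', h3'⟩ := hq'
    have e1 : q.1 * d + q.2.2 = q'.1 * d + q'.2.2 := congrArg Prod.fst hEq
    have e2 : q.2.1 * d + q.2.2 = q'.2.1 * d + q'.2.2 := congrArg Prod.snd hEq
    have hβ : q.2.2 = q'.2.2 := by
      have := congrArg (· % d) e1
      simpa [Nat.mul_add_mod', Nat.mod_eq_of_lt h3, Nat.mod_eq_of_lt h3'] using this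
    have hα1 : q.1 = q'.1 := Nat.eq_of_mul_eq_mul_right hd (by omega)
    have hα2 : q.2.1 = q'.2.1 := Nat.eq_of_mul_eq_mul_right hd (by omega)
    exact Prod.ext hα1 (Prod.ext hα2 hβ)
end

section
/- Let m ≥ 1 and let ν₂ be the pair partition of [2m] pairing 2k−1 with 2k+2 (indices mod 2m), and ν₀ the partition of [2m] with blocks {1}, {2,3}, {4,5}, …, {2m−2,2m−1}, {2m}. If m is odd, then ν₂ ∨ ν₀ = 1_{2m}; if m is even, then ν₂ ∨ ν₀ has exactly two blocks: one containing all elements 4k and 4k+1, and one containing all elements 4k+2 and 4k+3 (indices mod 2m). -/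
/-- The pairing `ν₂` of `[2m]` (0-based): pairs `x ↦ (x+3) mod 2m` for even
`x`; in 1-based labels this pairs `2k-1` with `2k+2` (mod `2m`). -/
def nu2 (m : ℕ) : Setoid (Fin (2 * m)) :=
  Relation.EqvGen.setoid (fun x y => Even x.val ∧ y.val = (x.val + 3) % (2 * m))

/-- The partition `ν₀` of `[2m]` (0-based): blocks `{2k-1, 2k}` for
`k = 1, …, m-1` and singletons `{0}`, `{2m-1}`; in 1-based labels, blocks
`{2k, 2k+1}` and singletons `{1}`, `{2m}`. -/
def nu0 (m : ℕ) : Setoid (Fin (2 * m)) :=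
  Relation.EqvGen.setoid
    (fun x y => Odd x.val ∧ y.val = x.val + 1 ∧ y.val ≤ 2 * m - 2)

def gg (m : ℕ) : Fin (2 * m) → Fin (2 * m) → Prop := fun x y =>
  (Even x.val ∧ y.val = (x.val + 3) % (2 * m)) ∨
  (Odd x.val ∧ y.val = x.val + 1 ∧ y.val ≤ 2 * m - 2)

lemma sup_eq_gg (m : ℕ) : nu2 m ⊔ nu0 m = Relation.EqvGen.setoid (gg m) := by
  rw [nu2, nu0, ← Setoid.gi.gc.l_sup]
  rfl

lemma gen2 (m a b : ℕ) (ha : a < 2 * m) (hb : b < 2 * m) (h1 : a % 2 = 0)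
    (h2 : b = (a + 3) % (2 * m)) : gg m ⟨a, ha⟩ ⟨b, hb⟩ :=
  Or.inl ⟨Nat.even_iff.2 h1, h2⟩

lemma gen0 (m a b : ℕ) (ha : a < 2 * m) (hb : b < 2 * m) (h1 : a % 2 = 1)
    (h2 : b = a + 1) (h3 : b ≤ 2 * m - 2) : gg m ⟨a, ha⟩ ⟨b, hb⟩ :=
  Or.inr ⟨Nat.odd_iff.2 h1, h2, h3⟩

lemma step_down (m : ℕ) (x : ℕ) (h4 : 4 ≤ x) (hlt : x < 2 * m) :
    Relation.EqvGen (gg m) ⟨x, hlt⟩ ⟨x - 4, by omega⟩ := by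
  rcases Nat.even_or_odd x with he | ho
  · rw [Nat.even_iff] at he
    refine Relation.EqvGen.symm _ _ (Relation.EqvGen.trans _ (⟨x - 1, by omega⟩) _
      (Relation.EqvGen.rel _ _ (gen2 m (x - 4) (x - 1) (by omega) (by omega) (by omega) ?_))
      (Relation.EqvGen.rel _ _ (gen0 m (x - 1) x (by omega) hlt (by omega) (by omega)
        (by omega))))
    rw [Nat.mod_eq_of_lt (by omega)]; omega
  · rw [Nat.odd_iff] at ho
    refine Relation.EqvGen.symm _ _ (Relation.EqvGen.trans _ (⟨x - 3, by omega⟩) _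
      (Relation.EqvGen.rel _ _ (gen0 m (x - 4) (x - 3) (by omega) (by omega) (by omega)
        (by omega) (by omega)))
      (Relation.EqvGen.rel _ _ (gen2 m (x - 3) x (by omega) hlt (by omega) ?_)))
    rw [Nat.mod_eq_of_lt (by omega)]; omega

lemma reach_mod (m : ℕ) (x : ℕ) (hlt : x < 2 * m) :
    Relation.EqvGen (gg m) ⟨x, hlt⟩ ⟨x % 4, lt_of_le_of_lt (Nat.mod_le x 4) hlt⟩ := by
  induction x using Nat.strong_induction_on with
  | _ x ih =>
    by_cases h4 : 4 ≤ x
    · have h1 := step_down m x h4 hlt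
      have h2 := ih (x - 4) (by omega) (by omega)
      refine Relation.EqvGen.trans _ _ _ h1 ?_
      convert h2 using 2
      omega
    · simp only [Nat.mod_eq_of_lt (show x < 4 by omega)]
      exact Relation.EqvGen.refl _

lemma canon0 (m x : ℕ) (hlt : x < 2 * m) (h : x % 4 = 0 ∨ x % 4 = 3) :
    Relation.EqvGen (gg m) ⟨x, hlt⟩ ⟨0, by omega⟩ := by
  refine Relation.EqvGen.trans _ _ _ (reach_mod m x hlt) ?_
  rcases h with h | h
  · simp only [h]
    exact Relation.EqvGen.refl _
  · simp only [h]
    exact Relation.EqvGen.symm _ _ (Relation.EqvGen.rel _ _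
      (gen2 m 0 3 (by omega) (by omega) (by omega)
        (by rw [Nat.mod_eq_of_lt (by omega)]) ))

lemma canon1 (m x : ℕ) (hlt : x < 2 * m) (h : x % 4 = 1 ∨ x % 4 = 2) :
    Relation.EqvGen (gg m) ⟨x, hlt⟩ ⟨1, by omega⟩ := by
  refine Relation.EqvGen.trans _ _ _ (reach_mod m x hlt) ?_
  rcases h with h | h
  · simp only [h]
    exact Relation.EqvGen.refl _
  · simp only [h]
    exact Relation.EqvGen.symm _ _ (Relation.EqvGen.rel _ _
      (gen0 m 1 2 (by omega) (by omega) (by omega) rfl (by omega)))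

lemma zero_one (m : ℕ) (hm : 1 ≤ m) (hmo : m % 2 = 1) :
    Relation.EqvGen (gg m) ⟨0, by omega⟩ ⟨1, by omega⟩ := by
  by_cases h1 : m = 1
  · subst h1
    exact Relation.EqvGen.rel _ _ (gen2 1 0 1 (by omega) (by omega) (by omega) (by norm_num))
  · have hm3 : 3 ≤ m := by omega
    have h1 := reach_mod m (2 * m - 2) (by omega)
    have hmod : (2 * m - 2) % 4 = 0 := by omega
    simp only [hmod] at h1
    refine Relation.EqvGen.trans _ _ _ (Relation.EqvGen.symm _ _ h1)
      (Relation.EqvGen.rel _ _ (gen2 m (2 * m - 2) 1 (by omega) (by omega) (by omega) ?_))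
    rw [show 2 * m - 2 + 3 = 2 * m + 1 by omega, Nat.add_mod_left,
      Nat.mod_eq_of_lt (by omega)]

lemma inv_even (m : ℕ) (hme : m % 2 = 0) (x y : Fin (2 * m))
    (h : Relation.EqvGen (gg m) x y) :
    ((x.val % 4 = 0 ∨ x.val % 4 = 3) ↔ (y.val % 4 = 0 ∨ y.val % 4 = 3)) := by
  induction h with
  | rel a b hab =>
    rcases hab with ⟨he, hb⟩ | ⟨ho, hb, _⟩
    · rw [Nat.even_iff] at he
      have h4 : (4 : ℕ) ∣ 2 * m := by omega
      have : b.val % 4 = (a.val + 3) % 4 := by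
        rw [hb, Nat.mod_mod_of_dvd _ h4]
      omega
    · rw [Nat.odd_iff] at ho
      omega
  | refl a => exact Iff.rfl
  | symm a b _ ih => exact ih.symm
  | trans a b c _ _ ih1 ih2 => exact ih1.trans ih2

/-- If `m` is odd then `ν₂ ∨ ν₀ = 1_{2m}`; if `m` is even then `ν₂ ∨ ν₀` has
exactly two blocks, one consisting of the elements `≡ 0, 3 (mod 4)` (1-based:
the elements `4k` and `4k+1`) and the other of the elements `≡ 1, 2 (mod 4)`
(1-based: `4k+2` and `4k+3`). -/
theorem stmt_15 (m : ℕ) (hm : 1 ≤ m) :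
    (Odd m → nu2 m ⊔ nu0 m = ⊤) ∧
    (Even m → ∀ x y : Fin (2 * m),
      (nu2 m ⊔ nu0 m).r x y ↔
        ((x.val % 4 = 0 ∨ x.val % 4 = 3) ↔ (y.val % 4 = 0 ∨ y.val % 4 = 3))) := by
  constructor
  · intro hodd
    rw [Nat.odd_iff] at hodd
    rw [sup_eq_gg]
    apply Setoid.ext
    intro a b
    refine ⟨fun _ => trivial, fun _ => ?_⟩
    have key : ∀ z : Fin (2 * m), Relation.EqvGen (gg m) z ⟨0, by omega⟩ := by
      intro z
      have hz4 : z.val % 4 < 4 := Nat.mod_lt _ (by norm_num)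
      by_cases hc : z.val % 4 = 0 ∨ z.val % 4 = 3
      · exact canon0 m z.val z.isLt hc
      · exact Relation.EqvGen.trans _ _ _ (canon1 m z.val z.isLt (by omega))
          (Relation.EqvGen.symm _ _ (zero_one m hm hodd))
    exact Relation.EqvGen.trans _ _ _ (key a) (Relation.EqvGen.symm _ _ (key b))
  · intro heven x y
    rw [Nat.even_iff] at heven
    rw [sup_eq_gg]
    show Relation.EqvGen (gg m) x y ↔ _
    constructor
    · exact inv_even m heven x y
    · intro h
      by_cases hc : x.val % 4 = 0 ∨ x.val % 4 = 3
      · exact Relation.EqvGen.trans _ _ _ (canon0 m x.val x.isLt hc)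
          (Relation.EqvGen.symm _ _ (canon0 m y.val y.isLt (h.1 hc)))
      · have hx4 : x.val % 4 < 4 := Nat.mod_lt _ (by norm_num)
        have hy : ¬(y.val % 4 = 0 ∨ y.val % 4 = 3) := fun hy' => hc (h.2 hy')
        have hy4 : y.val % 4 < 4 := Nat.mod_lt _ (by norm_num)
        exact Relation.EqvGen.trans _ _ _ (canon1 m x.val x.isLt (by omega))
          (Relation.EqvGen.symm _ _ (canon1 m y.val y.isLt (by omega)))
end
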